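/- Suppose P is nonempty and bounded and its strict interior P° = {x ∈ P : x > 0 componentwise} is nonempty. Then for every strictly positive vector μ ∈ ℝ^n_{>0} there exists a unique pair (x_μ, s_μ) ∈ P° × D° such that x_μ s_μ = μ componentwise. Furthermore, x_μ is the unique minimizer over P of the function f_μ(x) = cᵀx − Σ_{i=1}^n μ_i ln x_i. -/

import Mathlib

open Matrix

lemma pd_strict {d n : ℕ} (A : Matrix (Fin d) (Fin n) ℝ) (c : Fin n → ℝ)
    (μ : Fin n → ℝ) (hμ : ∀ i, 0 < μ i)
    (x : Fin n → ℝ) (hx : ∀ i, 0 < x i) (y : Fin d → ℝ)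
    (hsy : Aᵀ.mulVec y + (fun i => μ i / x i) = c)
    (x' : Fin n → ℝ) (hf : A.mulVec x' = A.mulVec x) (hx' : ∀ i, 0 < x' i) (hne : x' ≠ x) :
    c ⬝ᵥ x - ∑ i, μ i * Real.log (x i) < c ⬝ᵥ x' - ∑ i, μ i * Real.log (x' i) := by
  have hcd : c ⬝ᵥ x' - c ⬝ᵥ x = ∑ i, μ i / x i * (x' i - x i) := by
    have h1 : c ⬝ᵥ (x' - x) = (Aᵀ.mulVec y) ⬝ᵥ (x' - x) + (fun i => μ i / x i) ⬝ᵥ (x' - x) := by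
      rw [← add_dotProduct, hsy]
    have h2 : (Aᵀ.mulVec y) ⬝ᵥ (x' - x) = 0 := by
      rw [Matrix.mulVec_transpose, ← Matrix.dotProduct_mulVec, Matrix.mulVec_sub, hf,
        sub_self, dotProduct_zero]
    have h3 : c ⬝ᵥ (x' - x) = c ⬝ᵥ x' - c ⬝ᵥ x := by
      rw [dotProduct_sub]
    rw [← h3, h1, h2, zero_add]
    simp [dotProduct]
  have key : (c ⬝ᵥ x' - ∑ i, μ i * Real.log (x' i)) - (c ⬝ᵥ x - ∑ i, μ i * Real.log (x i))
      = ∑ i, μ i * ((x' i / x i) - 1 - Real.log (x' i / x i)) := by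
    have : ∀ i : Fin n, μ i * ((x' i / x i) - 1 - Real.log (x' i / x i))
        = μ i / x i * (x' i - x i) - (μ i * Real.log (x' i) - μ i * Real.log (x i)) := by
      intro i
      have hxi : x i ≠ 0 := ne_of_gt (hx i)
      rw [Real.log_div (ne_of_gt (hx' i)) hxi]
      field_simp
    rw [Finset.sum_congr rfl fun i _ => this i, Finset.sum_sub_distrib, Finset.sum_sub_distrib,
      ← hcd]
    ring
  have hpos : 0 < ∑ i, μ i * ((x' i / x i) - 1 - Real.log (x' i / x i)) := by
    obtain ⟨j, hj⟩ : ∃ j, x' j ≠ x j := by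
      by_contra h; push_neg at h; exact hne (funext h)
    have h0 : ∀ i ∈ Finset.univ, (0:ℝ) ≤ μ i * ((x' i / x i) - 1 - Real.log (x' i / x i)) := by
      intro i _
      have ht : 0 < x' i / x i := div_pos (hx' i) (hx i)
      have := Real.log_le_sub_one_of_pos ht
      nlinarith [(hμ i).le]
    have hstrict : (0:ℝ) < μ j * ((x' j / x j) - 1 - Real.log (x' j / x j)) := by
      have ht : 0 < x' j / x j := div_pos (hx' j) (hx j)
      have htne : x' j / x j ≠ 1 := by
        intro h
        apply hj
        have := (div_eq_one_iff_eq (ne_of_gt (hx j))).mp h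
        linarith
      have := Real.log_lt_sub_one_of_pos ht htne
      nlinarith [hμ j]
    calc (0:ℝ) = ∑ _i : Fin n, (0:ℝ) := by simp
    _ < _ := Finset.sum_lt_sum h0 ⟨j, Finset.mem_univ j, hstrict⟩
  linarith [key ▸ hpos]


lemma pd_grad {d n : ℕ} (A : Matrix (Fin d) (Fin n) ℝ) (c : Fin n → ℝ)
    (μ : Fin n → ℝ) (x : Fin n → ℝ) (hx : ∀ i, 0 < x i)
    (hmin : ∀ x', A.mulVec x' = A.mulVec x → (∀ i, 0 < x' i) →
      c ⬝ᵥ x - ∑ i, μ i * Real.log (x i) ≤ c ⬝ᵥ x' - ∑ i, μ i * Real.log (x' i)) :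
    ∃ y : Fin d → ℝ, Aᵀ.mulVec y + (fun i => μ i / x i) = c := by
  -- Step A: first-order condition along the kernel of A
  have stepA : ∀ v : Fin n → ℝ, A.mulVec v = 0 →
      (fun i => c i - μ i / x i) ⬝ᵥ v = 0 := by
    intro v hv
    set g : ℝ → ℝ := fun t => c ⬝ᵥ x + t * (c ⬝ᵥ v) - ∑ i, μ i * Real.log (x i + t * v i)
      with hg
    have hev : ∀ᶠ t in nhds (0:ℝ), ∀ i, 0 < x i + t * v i := by
      rw [Filter.eventually_all]
      intro i
      have hS : IsOpen ((fun t : ℝ => x i + t * v i) ⁻¹' Set.Ioi 0) :=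
        (isOpen_Ioi).preimage (by continuity)
      have h0 : (0:ℝ) ∈ (fun t : ℝ => x i + t * v i) ⁻¹' Set.Ioi 0 := by
        simpa using hx i
      exact Filter.eventually_iff.mpr (hS.mem_nhds h0)
    have hloc : IsLocalMin g 0 := by
      refine hev.mono fun t ht => ?_
      have hfeas : A.mulVec (x + t • v) = A.mulVec x := by
        rw [Matrix.mulVec_add, Matrix.mulVec_smul, hv, smul_zero, add_zero]
      have hpos : ∀ i, 0 < (x + t • v) i := by
        intro i; simpa [Pi.add_apply, Pi.smul_apply, smul_eq_mul] using ht i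
      have := hmin (x + t • v) hfeas hpos
      have hdot : c ⬝ᵥ (x + t • v) = c ⬝ᵥ x + t * (c ⬝ᵥ v) := by
        rw [dotProduct_add, dotProduct_smul]; simp [smul_eq_mul]
      simp only [hg]
      simpa [hdot, Pi.add_apply, Pi.smul_apply, smul_eq_mul] using this
    have hder : HasDerivAt g (c ⬝ᵥ v - ∑ i, μ i * (v i / x i)) 0 := by
      have h1 : HasDerivAt (fun t : ℝ => c ⬝ᵥ x + t * (c ⬝ᵥ v)) (c ⬝ᵥ v) 0 := by
        simpa using ((hasDerivAt_id (0:ℝ)).mul_const (c ⬝ᵥ v)).const_add (c ⬝ᵥ x)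
      have h2 : HasDerivAt (fun t : ℝ => ∑ i, μ i * Real.log (x i + t * v i))
          (∑ i, μ i * (v i / x i)) 0 := by
        apply HasDerivAt.fun_sum
        intro i _
        have hlin : HasDerivAt (fun t : ℝ => x i + t * v i) (v i) 0 := by
          simpa using ((hasDerivAt_id (0:ℝ)).mul_const (v i)).const_add (x i)
        have hne : x i + 0 * v i ≠ 0 := by simpa using (hx i).ne'
        have := (hlin.log hne).const_mul (μ i)
        simpa using this
      exact h1.sub h2
    have := hloc.hasDerivAt_eq_zero hder
    have hsum : (fun i => c i - μ i / x i) ⬝ᵥ v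
        = c ⬝ᵥ v - ∑ i, μ i * (v i / x i) := by
      simp only [dotProduct]
      rw [← Finset.sum_sub_distrib]
      exact Finset.sum_congr rfl fun i _ => by ring
    rw [hsum, this]
  -- Step B: conclude membership in the range of Aᵀ
  set w : Fin n → ℝ := fun i => c i - μ i / x i with hw
  set U : Submodule ℝ (Fin n → ℝ) := LinearMap.range (Matrix.mulVecLin Aᵀ) with hU
  have hwU : w ∈ U := by
    by_contra hnot
    obtain ⟨f, hfw, hfU⟩ := Submodule.exists_dual_map_eq_bot_of_notMem hnot inferInstance
    set v : Fin n → ℝ := fun i => f (Pi.single i 1) with hv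
    have hfeq : ∀ u : Fin n → ℝ, f u = u ⬝ᵥ v := by
      intro u
      rw [LinearMap.pi_apply_eq_sum_univ f u]
      simp only [dotProduct, hv]
      refine Finset.sum_congr rfl fun i _ => ?_
      congr 2
      funext j
      simp [Pi.single_apply, eq_comm]
    have hAv : A.mulVec v = 0 := by
      have hall : ∀ y : Fin d → ℝ, (A.mulVec v) ⬝ᵥ y = 0 := by
        intro y
        have hmem : Aᵀ.mulVec y ∈ U := ⟨y, rfl⟩
        have : f (Aᵀ.mulVec y) = 0 := by
          have := hfU ▸ Submodule.mem_map_of_mem (f := f) hmem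
          simpa using this
        rw [hfeq] at this
        have h4 : (Aᵀ.mulVec y) ⬝ᵥ v = (A.mulVec v) ⬝ᵥ y := by
          rw [dotProduct_comm, Matrix.dotProduct_mulVec, Matrix.vecMul_transpose]
        rw [← h4]; exact this
      have := hall (A.mulVec v)
      exact dotProduct_self_eq_zero.mp this
    exact hfw (by rw [hfeq]; exact stepA v hAv)
  obtain ⟨y, hy⟩ := hwU
  refine ⟨y, ?_⟩
  have : Aᵀ.mulVec y = w := hy
  funext i
  simp [Pi.add_apply, this, hw]


lemma pd_min_exists {d n : ℕ} (A : Matrix (Fin d) (Fin n) ℝ) (b : Fin d → ℝ) (c : Fin n → ℝ)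
    (hbdd : Bornology.IsBounded {x : Fin n → ℝ | A.mulVec x = b ∧ ∀ i, 0 ≤ x i})
    (hint : ∃ x : Fin n → ℝ, A.mulVec x = b ∧ ∀ i, 0 < x i)
    (μ : Fin n → ℝ) (hμ : ∀ i, 0 < μ i) :
    ∃ x : Fin n → ℝ, A.mulVec x = b ∧ (∀ i, 0 < x i) ∧
      ∀ x', A.mulVec x' = b → (∀ i, 0 < x' i) →
        c ⬝ᵥ x - ∑ i, μ i * Real.log (x i) ≤ c ⬝ᵥ x' - ∑ i, μ i * Real.log (x' i) := by
  obtain ⟨x0, hx0f, hx0p⟩ := hint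
  set f : (Fin n → ℝ) → ℝ := fun x => c ⬝ᵥ x - ∑ i, μ i * Real.log (x i) with hf
  rcases Nat.eq_zero_or_pos n with h0 | hn
  · refine ⟨x0, hx0f, hx0p, fun x' h1 h2 => le_of_eq ?_⟩
    have hE : IsEmpty (Fin n) := by rw [h0]; infer_instance
    have : x0 = x' := funext fun i => (hE.false i).elim
    rw [this]
  have hFinNe : (Finset.univ : Finset (Fin n)).Nonempty :=
    Finset.univ_nonempty_iff.mpr (Fin.pos_iff_nonempty.mp hn)
  -- bound M on coordinates of feasible points
  obtain ⟨r, hr⟩ := (Metric.isBounded_iff_subset_closedBall 0).mp hbdd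
  set M : ℝ := max r 1 with hM
  have hM1 : (1:ℝ) ≤ M := le_max_right r 1
  have hMpos : (0:ℝ) < M := lt_of_lt_of_le one_pos hM1
  have hcoord : ∀ x : Fin n → ℝ, A.mulVec x = b → (∀ i, 0 ≤ x i) → ∀ i, x i ≤ M := by
    intro x hxf hxp i
    have hx : x ∈ Metric.closedBall (0 : Fin n → ℝ) r := hr ⟨hxf, hxp⟩
    rw [Metric.mem_closedBall, dist_zero_right] at hx
    have := norm_le_pi_norm x i
    have : |x i| ≤ r := le_trans (by simpa using this) hx
    calc x i ≤ |x i| := le_abs_self _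
    _ ≤ r := this
    _ ≤ M := le_max_left r 1
  -- constants
  set C1 : ℝ := (∑ i, |c i|) * M with hC1
  have hdotlb : ∀ x : Fin n → ℝ, (∀ i, 0 ≤ x i) → (∀ i, x i ≤ M) → -C1 ≤ c ⬝ᵥ x := by
    intro x hxp hxM
    have habs : |c ⬝ᵥ x| ≤ C1 := by
      calc |c ⬝ᵥ x| ≤ ∑ i, |c i * x i| := Finset.abs_sum_le_sum_abs _ _
      _ ≤ ∑ i, |c i| * M := by
          refine Finset.sum_le_sum fun i _ => ?_
          rw [abs_mul, abs_of_nonneg (hxp i)]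
          exact mul_le_mul_of_nonneg_left (hxM i) (abs_nonneg _)
      _ = C1 := by rw [← Finset.sum_mul]
    linarith [neg_abs_le (c ⬝ᵥ x), habs]
  set S : ℝ := ∑ i, μ i with hS
  have hSpos : 0 < S := Finset.sum_pos (fun i _ => hμ i) hFinNe
  set m : ℝ := Finset.univ.inf' hFinNe μ with hm
  have hmpos : 0 < m := by
    obtain ⟨j, _, hj⟩ := Finset.exists_mem_eq_inf' hFinNe μ
    rw [hm, hj]; exact hμ j
  have hmle : ∀ i, m ≤ μ i := fun i => Finset.inf'_le μ (Finset.mem_univ i)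
  set a : ℝ := Finset.univ.inf' hFinNe x0 with ha
  have hapos : 0 < a := by
    obtain ⟨j, _, hj⟩ := Finset.exists_mem_eq_inf' hFinNe x0
    rw [ha, hj]; exact hx0p j
  have hale : ∀ i, a ≤ x0 i := fun i => Finset.inf'_le x0 (Finset.mem_univ i)
  set δ : ℝ := min (min a 1) (Real.exp (-(f x0 + C1 + S * Real.log M + 1) / m)) with hδ
  have hδpos : 0 < δ :=
    lt_min (lt_min hapos one_pos) (Real.exp_pos _)
  have hδa : δ ≤ a := le_trans (min_le_left _ _) (min_le_left _ _)
  have hδ1 : δ ≤ 1 := le_trans (min_le_left _ _) (min_le_right _ _)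
  have hδlog : Real.log δ ≤ -(f x0 + C1 + S * Real.log M + 1) / m := by
    calc Real.log δ ≤ Real.log (Real.exp (-(f x0 + C1 + S * Real.log M + 1) / m)) :=
          Real.log_le_log hδpos (min_le_right _ _)
    _ = _ := Real.log_exp _
  have hδlog0 : Real.log δ ≤ 0 := Real.log_nonpos hδpos.le hδ1
  have hlogM0 : 0 ≤ Real.log M := Real.log_nonneg hM1
  -- the barrier lower bound: small coordinate forces large f
  have hbig : ∀ x : Fin n → ℝ, A.mulVec x = b → (∀ i, 0 < x i) →
      ∀ j, x j ≤ δ → f x0 < f x := by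
    intro x hxf hxp j hxj
    have hxM : ∀ i, x i ≤ M := hcoord x hxf (fun i => (hxp i).le)
    have hlb : -C1 ≤ c ⬝ᵥ x := hdotlb x (fun i => (hxp i).le) hxM
    have hsum : ∑ i, μ i * Real.log (x i) ≤ S * Real.log M + m * Real.log δ := by
      have hsplit : ∑ i, μ i * Real.log (x i)
          = μ j * Real.log (x j) + ∑ i ∈ Finset.univ.erase j, μ i * Real.log (x i) :=
        (Finset.add_sum_erase _ _ (Finset.mem_univ j)).symm
      have h1 : ∑ i ∈ Finset.univ.erase j, μ i * Real.log (x i) ≤ S * Real.log M := by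
        calc ∑ i ∈ Finset.univ.erase j, μ i * Real.log (x i)
            ≤ ∑ i ∈ Finset.univ.erase j, μ i * Real.log M := by
              refine Finset.sum_le_sum fun i _ => ?_
              exact mul_le_mul_of_nonneg_left (Real.log_le_log (hxp i) (hxM i)) (hμ i).le
        _ ≤ ∑ i, μ i * Real.log M := by
              refine Finset.sum_le_sum_of_subset_of_nonneg (Finset.erase_subset _ _)
                fun i _ _ => mul_nonneg (hμ i).le hlogM0
        _ = S * Real.log M := by rw [hS, Finset.sum_mul]
      have h2 : μ j * Real.log (x j) ≤ m * Real.log δ := by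
        have hlx : Real.log (x j) ≤ Real.log δ := Real.log_le_log (hxp j) hxj
        nlinarith [hmle j, hμ j, hmpos]
      linarith
    have hkey : m * (-Real.log δ) ≥ f x0 + C1 + S * Real.log M + 1 := by
      have := mul_le_mul_of_nonneg_left hδlog hmpos.le
      rw [mul_div_cancel₀ _ (ne_of_gt hmpos)] at this
      linarith
    have : f x0 + 1 ≤ f x := by
      have : f x = c ⬝ᵥ x - ∑ i, μ i * Real.log (x i) := rfl
      rw [this]; linarith
    linarith
  -- the compact truncated set
  set K : Set (Fin n → ℝ) := {x | A.mulVec x = b ∧ ∀ i, δ ≤ x i} with hK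
  have hKsub : K ⊆ {x : Fin n → ℝ | A.mulVec x = b ∧ ∀ i, 0 ≤ x i} :=
    fun x hx => ⟨hx.1, fun i => le_trans hδpos.le (hx.2 i)⟩
  have hKbdd : Bornology.IsBounded K := hbdd.subset hKsub
  have hKclosed : IsClosed K := by
    have h1 : IsClosed {x : Fin n → ℝ | A.mulVec x = b} := by
      have : Continuous fun x : Fin n → ℝ => A.mulVec x :=
        LinearMap.continuous_of_finiteDimensional (Matrix.mulVecLin A)
      exact isClosed_eq this continuous_const
    have h2 : IsClosed {x : Fin n → ℝ | ∀ i, δ ≤ x i} := by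
      have : {x : Fin n → ℝ | ∀ i, δ ≤ x i} = ⋂ i, {x : Fin n → ℝ | δ ≤ x i} := by
        ext x; simp
      rw [this]
      exact isClosed_iInter fun i => isClosed_le continuous_const (continuous_apply i)
    exact h1.inter h2
  have hKcompact : IsCompact K := Metric.isCompact_of_isClosed_isBounded hKclosed hKbdd
  have hx0K : x0 ∈ K := ⟨hx0f, fun i => le_trans hδa (hale i)⟩
  have hfc : ContinuousOn f K := by
    refine continuousOn_of_forall_continuousAt fun x hx => ?_
    have h1 : ContinuousAt (fun x : Fin n → ℝ => c ⬝ᵥ x) x := by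
      have : Continuous fun x : Fin n → ℝ => c ⬝ᵥ x := by
        simp only [dotProduct]
        exact continuous_finset_sum _ fun i _ => continuous_const.mul (continuous_apply i)
      exact this.continuousAt
    have h2 : ContinuousAt (fun x : Fin n → ℝ => ∑ i, μ i * Real.log (x i)) x := by
      have : ∀ i ∈ Finset.univ, ContinuousAt (fun x : Fin n → ℝ => μ i * Real.log (x i)) x := by
        intro i _
        have hne : x i ≠ 0 := ne_of_gt (lt_of_lt_of_le hδpos (hx.2 i))
        exact continuousAt_const.mul ((continuous_apply i).continuousAt.log hne)
      exact tendsto_finset_sum _ this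
    exact h1.sub h2
  obtain ⟨z, hzK, hzmin⟩ := hKcompact.exists_isMinOn ⟨x0, hx0K⟩ hfc
  refine ⟨z, hzK.1, fun i => lt_of_lt_of_le hδpos (hzK.2 i), fun x' hx'f hx'p => ?_⟩
  by_cases hcase : ∀ i, δ ≤ x' i
  · exact hzmin ⟨hx'f, hcase⟩
  · push_neg at hcase
    obtain ⟨j, hj⟩ := hcase
    have h1 : f x0 < f x' := hbig x' hx'f hx'p j hj.le
    have h2 : f z ≤ f x0 := hzmin hx0K
    exact le_of_lt (lt_of_le_of_lt h2 h1)


/-- Quadrant representation of primal-dual: if `P` is nonempty and bounded and has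
nonempty strict interior, then for every `μ > 0` there is a unique pair
`(x_μ, s_μ) ∈ P° × D°` with `x_μ s_μ = μ` componentwise; moreover `x_μ` is the unique
minimizer of `f_μ(x) = cᵀx − Σ μ_i ln x_i` over the strictly positive feasible points. -/
theorem primal_dual_representation {d n : ℕ}
    (A : Matrix (Fin d) (Fin n) ℝ) (b : Fin d → ℝ) (c : Fin n → ℝ)
    (hne : ∃ x : Fin n → ℝ, A.mulVec x = b ∧ ∀ i, 0 ≤ x i)
    (hbdd : Bornology.IsBounded {x : Fin n → ℝ | A.mulVec x = b ∧ ∀ i, 0 ≤ x i})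
    (hint : ∃ x : Fin n → ℝ, A.mulVec x = b ∧ ∀ i, 0 < x i)
    (μ : Fin n → ℝ) (hμ : ∀ i, 0 < μ i) :
    ∃ p : (Fin n → ℝ) × (Fin n → ℝ),
      ((A.mulVec p.1 = b ∧ (∀ i, 0 < p.1 i)) ∧
        ((∃ y : Fin d → ℝ, Aᵀ.mulVec y + p.2 = c) ∧ (∀ i, 0 < p.2 i)) ∧
        (∀ i, p.1 i * p.2 i = μ i)) ∧
      (∀ q : (Fin n → ℝ) × (Fin n → ℝ),
        ((A.mulVec q.1 = b ∧ (∀ i, 0 < q.1 i)) ∧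
          ((∃ y : Fin d → ℝ, Aᵀ.mulVec y + q.2 = c) ∧ (∀ i, 0 < q.2 i)) ∧
          (∀ i, q.1 i * q.2 i = μ i)) → q = p) ∧
      (∀ x' : Fin n → ℝ, A.mulVec x' = b → (∀ i, 0 < x' i) → x' ≠ p.1 →
        c ⬝ᵥ p.1 - ∑ i, μ i * Real.log (p.1 i) <
          c ⬝ᵥ x' - ∑ i, μ i * Real.log (x' i)) := by
  obtain ⟨x, hxf, hxp, hxmin⟩ := pd_min_exists A b c hbdd hint μ hμ
  obtain ⟨y, hy⟩ := pd_grad A c μ x hxp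
    (fun x' h1 h2 => hxmin x' (by rw [h1, hxf]) h2)
  refine ⟨(x, fun i => μ i / x i), ⟨⟨hxf, hxp⟩, ⟨⟨y, hy⟩, fun i => div_pos (hμ i) (hxp i)⟩,
      fun i => mul_div_cancel₀ (μ i) (ne_of_gt (hxp i))⟩, ?_, ?_⟩
  · rintro ⟨q1, q2⟩ ⟨⟨hq1f, hq1p⟩, ⟨⟨yq, hyq⟩, hq2p⟩, hqprod⟩
    have hq2 : q2 = fun i => μ i / q1 i := by
      funext i
      rw [eq_div_iff (ne_of_gt (hq1p i)), mul_comm]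
      exact hqprod i
    rw [hq2] at hyq
    have hq1x : q1 = x := by
      by_contra hne'
      have h1 : c ⬝ᵥ x - ∑ i, μ i * Real.log (x i) <
          c ⬝ᵥ q1 - ∑ i, μ i * Real.log (q1 i) :=
        pd_strict A c μ hμ x hxp y hy q1 (by rw [hq1f, hxf]) hq1p hne'
      have h2 : c ⬝ᵥ q1 - ∑ i, μ i * Real.log (q1 i) <
          c ⬝ᵥ x - ∑ i, μ i * Real.log (x i) :=
        pd_strict A c μ hμ q1 hq1p yq hyq x (by rw [hq1f, hxf]) hxp
          (fun h => hne' h.symm)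
      linarith
    rw [Prod.mk.injEq]
    exact ⟨hq1x, by rw [hq2, hq1x]⟩
  · intro x' hx'f hx'p hne'
    exact pd_strict A c μ hμ x hxp y hy x' (by rw [hx'f, hxf]) hx'p hne'
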